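/- Let M = (x, p) be a deterministic mechanism for 2 agents, 2 divisible items, multi-dimensional additive valuations, and public budgets b, that respects budgets, is incentive compatible, and whose outcome on every valuation profile is individually rational and Pareto optimal. Then for every valuation profile v satisfying b 2 > v 2 1 + v 2 2, v 2 1 > v 1 1, and v 2 2 > v 1 2, the outcome satisfies x 1 1 = 0, x 1 2 = 0, x 2 1 = 1, x 2 2 = 1, and agent 1's utility is 0 (equivalently p 1 = 0). -/

import Mathlib

open Finset

/-- A feasible (divisible) allocation: fractions in `[0,1]` and each item sold at most once.
Agents/items are indexed from `0` (paper's agent/item `k` is index `k-1`). -/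
def Feasible (n m : ℕ) (x : Fin n → Fin m → ℝ) : Prop :=
  (∀ i j, 0 ≤ x i j ∧ x i j ≤ 1) ∧ ∀ j, ∑ i, x i j ≤ 1

/-- Agent `i`'s (additive, multi-dimensional) value for allocation `x` under valuations `v`. -/
def agentValue {n m : ℕ} (v x : Fin n → Fin m → ℝ) (i : Fin n) : ℝ :=
  ∑ j, x i j * v i j

/-- Individual rationality of an outcome `(x, p)` under valuations `v`. -/
def IR {n m : ℕ} (v x : Fin n → Fin m → ℝ) (p : Fin n → ℝ) : Prop :=
  (∀ i, 0 ≤ agentValue v x i - p i) ∧ 0 ≤ ∑ i, p i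

/-- Pareto optimality of an outcome `(x, p)` under valuations `v` and budgets `b`. -/
def PO {n m : ℕ} (b : Fin n → ℝ) (v x : Fin n → Fin m → ℝ) (p : Fin n → ℝ) : Prop :=
  ¬ ∃ (x' : Fin n → Fin m → ℝ) (p' : Fin n → ℝ),
      Feasible n m x' ∧ (∀ i, p' i ≤ b i) ∧
      (∀ i, agentValue v x i - p i ≤ agentValue v x' i - p' i) ∧
      (∑ i, p i ≤ ∑ i, p' i) ∧
      ((∃ i, agentValue v x i - p i < agentValue v x' i - p' i) ∨ ∑ i, p i < ∑ i, p' i)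

/-- The payment rule respects the public budgets `b` on every (nonnegative) profile. -/
def RespectsBudgets {n m : ℕ} (b : Fin n → ℝ)
    (P : (Fin n → Fin m → ℝ) → Fin n → ℝ) : Prop :=
  ∀ v : Fin n → Fin m → ℝ, (∀ i j, 0 ≤ v i j) → ∀ i, P v i ≤ b i

/-- Incentive compatibility of a deterministic mechanism `(X, P)`. -/
def IC {n m : ℕ} (X : (Fin n → Fin m → ℝ) → Fin n → Fin m → ℝ)
    (P : (Fin n → Fin m → ℝ) → Fin n → ℝ) : Prop :=
  ∀ v : Fin n → Fin m → ℝ, (∀ i j, 0 ≤ v i j) →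
    ∀ (i : Fin n) (v'i : Fin m → ℝ), (∀ j, 0 ≤ v'i j) →
      agentValue v (X (Function.update v i v'i)) i - P (Function.update v i v'i) i ≤
        agentValue v (X v) i - P v i


/-- Winner-take-all lemma: if agent 1's valuations strictly dominate agent 0's and
agent 1's budget exceeds its total value, then at an IR & PO outcome agent 1 gets
both items entirely. -/
lemma winnerTakesAll (b : Fin 2 → ℝ)
    (X : (Fin 2 → Fin 2 → ℝ) → Fin 2 → Fin 2 → ℝ)
    (P : (Fin 2 → Fin 2 → ℝ) → Fin 2 → ℝ)
    (hX : ∀ v : Fin 2 → Fin 2 → ℝ, (∀ i j, 0 ≤ v i j) → Feasible 2 2 (X v))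
    (hP : RespectsBudgets b P)
    (hIRPO : ∀ v : Fin 2 → Fin 2 → ℝ, (∀ i j, 0 ≤ v i j) →
      IR v (X v) (P v) ∧ PO b v (X v) (P v))
    (v : Fin 2 → Fin 2 → ℝ) (hv : ∀ i j, 0 ≤ v i j)
    (h1 : v 1 0 + v 1 1 < b 1) (h2 : v 0 0 < v 1 0) (h3 : v 0 1 < v 1 1) :
    X v 0 0 = 0 ∧ X v 0 1 = 0 ∧ X v 1 0 = 1 ∧ X v 1 1 = 1 := by
  obtain ⟨hbox, hsum⟩ := hX v hv
  have hs0 := hsum 0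
  have hs1 := hsum 1
  rw [Fin.sum_univ_two] at hs0 hs1
  obtain ⟨hIRv, hPOv⟩ := hIRPO v hv
  have hIR1 := hIRv.1 1
  simp only [agentValue, Fin.sum_univ_two] at hIR1
  have hv10 : 0 < v 1 0 := lt_of_le_of_lt (hv 0 0) h2
  have hv11 : 0 < v 1 1 := lt_of_le_of_lt (hv 0 1) h3
  have key0 : X v 0 0 * v 0 0 ≤ (1 - X v 1 0) * v 1 0 := by
    have A0 : 0 ≤ X v 0 0 * (v 1 0 - v 0 0) := mul_nonneg (hbox 0 0).1 (by linarith)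
    have B0 : 0 ≤ (1 - X v 1 0 - X v 0 0) * v 1 0 := mul_nonneg (by linarith) (hv 1 0)
    nlinarith [A0, B0]
  have key1 : X v 0 1 * v 0 1 ≤ (1 - X v 1 1) * v 1 1 := by
    have A1 : 0 ≤ X v 0 1 * (v 1 1 - v 0 1) := mul_nonneg (hbox 0 1).1 (by linarith)
    have B1 : 0 ≤ (1 - X v 1 1 - X v 0 1) * v 1 1 := mul_nonneg (by linarith) (hv 1 1)
    nlinarith [A1, B1]
  have strict0 : X v 1 0 < 1 → X v 0 0 * v 0 0 < (1 - X v 1 0) * v 1 0 := by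
    intro hx
    rcases ((hbox 0 0).1).lt_or_eq with hpos | hzero
    · have A0 : 0 < X v 0 0 * (v 1 0 - v 0 0) := mul_pos hpos (by linarith)
      have B0 : 0 ≤ (1 - X v 1 0 - X v 0 0) * v 1 0 := mul_nonneg (by linarith) (hv 1 0)
      nlinarith [A0, B0]
    · have : 0 < (1 - X v 1 0) * v 1 0 := mul_pos (by linarith) hv10
      rw [← hzero, zero_mul]
      exact this
  have strict1 : X v 1 1 < 1 → X v 0 1 * v 0 1 < (1 - X v 1 1) * v 1 1 := by
    intro hx
    rcases ((hbox 0 1).1).lt_or_eq with hpos | hzero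
    · have A1 : 0 < X v 0 1 * (v 1 1 - v 0 1) := mul_pos hpos (by linarith)
      have B1 : 0 ≤ (1 - X v 1 1 - X v 0 1) * v 1 1 := mul_nonneg (by linarith) (hv 1 1)
      nlinarith [A1, B1]
    · have : 0 < (1 - X v 1 1) * v 1 1 := mul_pos (by linarith) hv11
      rw [← hzero, zero_mul]
      exact this
  have hkey : X v 1 0 = 1 ∧ X v 1 1 = 1 := by
    by_contra hcon
    have hlt : X v 1 0 < 1 ∨ X v 1 1 < 1 := by
      by_contra hno
      push_neg at hno
      exact hcon ⟨le_antisymm (hbox 1 0).2 hno.1, le_antisymm (hbox 1 1).2 hno.2⟩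
    have hstrict : X v 0 0 * v 0 0 + X v 0 1 * v 0 1 <
        (1 - X v 1 0) * v 1 0 + (1 - X v 1 1) * v 1 1 := by
      rcases hlt with hx | hx
      · linarith [strict0 hx, key1]
      · linarith [strict1 hx, key0]
    apply hPOv
    refine ⟨fun i _ => if i = 1 then 1 else 0,
      ![P v 0 - (X v 0 0 * v 0 0 + X v 0 1 * v 0 1),
        P v 1 + ((1 - X v 1 0) * v 1 0 + (1 - X v 1 1) * v 1 1)], ?_, ?_, ?_, ?_, ?_⟩
    · constructor
      · intro i j
        fin_cases i <;> norm_num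
      · intro j
        rw [Fin.sum_univ_two]
        norm_num
    · rw [Fin.forall_fin_two]
      constructor
      · have hb0 := hP v hv 0
        have m0 : 0 ≤ X v 0 0 * v 0 0 := mul_nonneg (hbox 0 0).1 (hv 0 0)
        have m1 : 0 ≤ X v 0 1 * v 0 1 := mul_nonneg (hbox 0 1).1 (hv 0 1)
        simp only [Matrix.cons_val_zero]
        linarith
      · simp only [Matrix.cons_val_one, Matrix.head_cons, Matrix.cons_val_zero]
        linarith
    · rw [Fin.forall_fin_two]
      constructor
      · simp only [agentValue, Fin.sum_univ_two, Matrix.cons_val_zero, Matrix.cons_val_one,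
          Matrix.head_cons]
        norm_num
      · simp only [agentValue, Fin.sum_univ_two, Matrix.cons_val_zero, Matrix.cons_val_one,
          Matrix.head_cons]
        norm_num
        nlinarith []
    · rw [Fin.sum_univ_two, Fin.sum_univ_two]
      simp only [Matrix.cons_val_zero, Matrix.cons_val_one, Matrix.head_cons]
      linarith
    · right
      rw [Fin.sum_univ_two, Fin.sum_univ_two]
      simp only [Matrix.cons_val_zero, Matrix.cons_val_one, Matrix.head_cons]
      linarith
  obtain ⟨hk0, hk1⟩ := hkey
  refine ⟨?_, ?_, hk0, hk1⟩
  · have := (hbox 0 0).1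
    rw [hk0] at hs0
    linarith
  · have := (hbox 0 1).1
    rw [hk1] at hs1
    linarith

/-- Case 1 of the multi-dimensional analysis: with 2 agents and 2 divisible
items (index 0 = paper's agent/item 1, index 1 = paper's agent/item 2), if
`b 2 > v 2 1 + v 2 2`, `v 2 1 > v 1 1`, and `v 2 2 > v 1 2`, then every IR, PO, IC mechanism
gives both items to agent 2 and agent 1 has utility 0 (equivalently pays 0). -/
theorem stmt2 (b : Fin 2 → ℝ) (hb : ∀ i, 0 ≤ b i)
    (X : (Fin 2 → Fin 2 → ℝ) → Fin 2 → Fin 2 → ℝ)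
    (P : (Fin 2 → Fin 2 → ℝ) → Fin 2 → ℝ)
    (hX : ∀ v : Fin 2 → Fin 2 → ℝ, (∀ i j, 0 ≤ v i j) → Feasible 2 2 (X v))
    (hP : RespectsBudgets b P)
    (hIC : IC X P)
    (hIRPO : ∀ v : Fin 2 → Fin 2 → ℝ, (∀ i j, 0 ≤ v i j) →
      IR v (X v) (P v) ∧ PO b v (X v) (P v))
    (v : Fin 2 → Fin 2 → ℝ) (hv : ∀ i j, 0 ≤ v i j)
    (h1 : v 1 0 + v 1 1 < b 1) (h2 : v 0 0 < v 1 0) (h3 : v 0 1 < v 1 1) :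
    X v 0 0 = 0 ∧ X v 0 1 = 0 ∧ X v 1 0 = 1 ∧ X v 1 1 = 1 ∧
      agentValue v (X v) 0 - P v 0 = 0 ∧ P v 0 = 0 := by
  obtain ⟨hx00, hx01, hx10, hx11⟩ := winnerTakesAll b X P hX hP hIRPO v hv h1 h2 h3
  have hav0 : agentValue v (X v) 0 = 0 := by
    simp [agentValue, Fin.sum_univ_two, hx00, hx01]
  have hIRv := (hIRPO v hv).1
  have hp0le : P v 0 ≤ 0 := by
    have := hIRv.1 0
    rw [hav0] at this
    linarith
  have hv10 : 0 < v 1 0 := lt_of_le_of_lt (hv 0 0) h2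
  have hv11 : 0 < v 1 1 := lt_of_le_of_lt (hv 0 1) h3
  have hp0 : P v 0 = 0 := by
    refine le_antisymm hp0le ?_
    by_contra hneg
    push_neg at hneg
    obtain ⟨δ, hδ⟩ : ∃ δ : ℝ, δ = -P v 0 := ⟨_, rfl⟩
    have hδpos : 0 < δ := by rw [hδ]; linarith
    set t : Fin 2 → ℝ := fun j => min (δ/6) (v 1 j / 2) with htdef
    have hv1pos : ∀ j : Fin 2, 0 < v 1 j := by
      intro j; fin_cases j
      · exact hv10
      · exact hv11
    have ht0 : ∀ j, 0 ≤ t j := fun j => le_min (by linarith) (by linarith [hv1pos j])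
    have htlt : ∀ j, t j < v 1 j := fun j =>
      lt_of_le_of_lt (min_le_right _ _) (by linarith [hv1pos j])
    have htle : ∀ j, t j ≤ δ/6 := fun j => min_le_left _ _
    have htsum : t 0 + t 1 < b 1 := by linarith [htlt 0, htlt 1]
    set m : ℝ := min (δ/6) ((b 1 - (t 0 + t 1))/4) with hmdef
    have hmpos : 0 < m := lt_min (by linarith) (by linarith)
    have hmle : m ≤ δ/6 := min_le_left _ _
    have hmle2 : m ≤ (b 1 - (t 0 + t 1))/4 := min_le_right _ _
    set w : Fin 2 → ℝ := fun j => t j + m with hwdef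
    have hw0 : ∀ j, 0 ≤ w j := fun j => by
      simp only [hwdef]; linarith [ht0 j]
    have hwgt : ∀ j, t j < w j := fun j => by simp only [hwdef]; linarith
    have hwle : ∀ j, w j ≤ δ/3 := fun j => by simp only [hwdef]; linarith [htle j]
    have hwsum : w 0 + w 1 < b 1 := by
      simp only [hwdef]; linarith
    set u1 : Fin 2 → Fin 2 → ℝ := Function.update v 0 t with hu1def
    have e10 : u1 0 = t := Function.update_self 0 t v
    have e11 : u1 1 = v 1 := Function.update_of_ne (by decide) t v
    have hu1nn : ∀ i j, 0 ≤ u1 i j := by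
      intro i j
      fin_cases i
      · rw [show (⟨0, by norm_num⟩ : Fin 2) = 0 from rfl, e10]; exact ht0 j
      · rw [show (⟨1, by norm_num⟩ : Fin 2) = 1 from rfl, e11]; exact hv 1 j
    have hA := winnerTakesAll b X P hX hP hIRPO u1 hu1nn
      (by rw [e11]; exact h1) (by rw [e10, e11]; exact htlt 0) (by rw [e10, e11]; exact htlt 1)
    set u2 : Fin 2 → Fin 2 → ℝ := Function.update u1 1 w with hu2def
    have f20 : u2 0 = t := by
      rw [hu2def, Function.update_of_ne (by decide) w u1, e10]
    have f21 : u2 1 = w := Function.update_self 1 w u1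
    have hu2nn : ∀ i j, 0 ≤ u2 i j := by
      intro i j
      fin_cases i
      · rw [show (⟨0, by norm_num⟩ : Fin 2) = 0 from rfl, f20]; exact ht0 j
      · rw [show (⟨1, by norm_num⟩ : Fin 2) = 1 from rfl, f21]; exact hw0 j
    have hB := winnerTakesAll b X P hX hP hIRPO u2 hu2nn
      (by rw [f21]; exact hwsum) (by rw [f20, f21]; exact hwgt 0) (by rw [f20, f21]; exact hwgt 1)
    -- IC for agent 0 at profile u1 deviating to the true report v 0
    have hupd1 : Function.update u1 0 (v 0) = v := by
      rw [hu1def, Function.update_idem, Function.update_eq_self]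
    have hic1 := hIC u1 hu1nn 0 (v 0) (fun j => hv 0 j)
    rw [hupd1] at hic1
    simp only [agentValue, Fin.sum_univ_two, hx00, hx01, hA.1, hA.2.1, zero_mul, add_zero,
      zero_sub] at hic1
    -- hic1 : -P v 0 ≤ -P u1 0, i.e. P u1 0 ≤ P v 0
    -- IC for agent 1 at profile u1 deviating to w
    have hic2 := hIC u1 hu1nn 1 w hw0
    rw [← hu2def] at hic2
    simp only [agentValue, Fin.sum_univ_two, hA.2.2.1, hA.2.2.2, hB.2.2.1, hB.2.2.2,
      one_mul] at hic2
    -- hic2 : u1 1 0 + u1 1 1 - P u2 1 ≤ u1 1 0 + u1 1 1 - P u1 1, i.e. P u1 1 ≤ P u2 1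
    have hp12 : P u1 1 ≤ P u2 1 := by linarith
    -- IR at u2 for agent 1
    have hiru2 := ((hIRPO u2 hu2nn).1).1 1
    simp only [agentValue, Fin.sum_univ_two, hB.2.2.1, hB.2.2.2, one_mul, f21] at hiru2
    -- IR sum at u1
    have hiru1 := ((hIRPO u1 hu1nn).1).2
    rw [Fin.sum_univ_two] at hiru1
    have hfinal : P v 0 ≥ -(w 0 + w 1) := by linarith
    have hw2 : -(w 0 + w 1) ≥ -(2*δ/3) := by linarith [hwle 0, hwle 1]
    have hPv : P v 0 = -δ := by rw [hδ]; ring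
    clear_value t m w u1 u2
    linarith
  refine ⟨hx00, hx01, hx10, hx11, ?_, hp0⟩
  rw [hav0, hp0]
  ring
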